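/- The following are equivalent: (a) every zero of ζ in the critical strip S has real part 1/2 and is simple (the Riemann hypothesis together with the simplicity hypothesis); (b) every zero α of ζ in S, of order m, satisfies |1 − 1/(mα)| = 1, i.e. every such α is an indifferent fixed point of ν_ζ. -/

import Mathlib

open Complex

/-- The nu function of the Riemann zeta function: `ν_ζ(z) = z - ζ(z)/(z ζ'(z))`. -/
noncomputable def nuZeta (z : ℂ) : ℂ := z - riemannZeta z / (z * deriv riemannZeta z)

private lemma zeta_analyticAt {s : ℂ} (hs : s ≠ 1) : AnalyticAt ℂ riemannZeta s := by
  have hd : DifferentiableOn ℂ riemannZeta {(1 : ℂ)}ᶜ := fun z hz =>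
    (differentiableAt_riemannZeta hz).differentiableWithinAt
  exact hd.analyticAt (isOpen_compl_singleton.mem_nhds hs)

private lemma zeta_not_ev_zero {s : ℂ} (hs : s ≠ 1) :
    ¬ ∀ᶠ z in nhds s, riemannZeta z = 0 := by
  intro hev
  have hA : AnalyticOnNhd ℂ riemannZeta {(1 : ℂ)}ᶜ := fun z hz => zeta_analyticAt hz
  have hconn : IsPreconnected ({(1 : ℂ)}ᶜ : Set ℂ) :=
    (isConnected_compl_singleton_of_one_lt_rank
      (rank_real_complex ▸ Nat.one_lt_ofNat) _).isPreconnected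
  have h2 : (2 : ℂ) ∈ ({(1 : ℂ)}ᶜ : Set ℂ) := by
    simp only [Set.mem_compl_iff, Set.mem_singleton_iff]
    norm_num
  have heqz := hA.eqOn_zero_of_preconnected_of_eventuallyEq_zero hconn hs hev h2
  rw [riemannZeta_two] at heqz
  simp only [Pi.zero_apply, div_eq_zero_iff, pow_eq_zero_iff, Complex.ofReal_eq_zero,
    Real.pi_ne_zero, OfNat.ofNat_ne_zero, or_self, false_or] at heqz
  exact absurd heqz (by norm_num [Real.pi_ne_zero])

/-- Any local factorization pins down the analytic order. -/
private lemma order_of_factor {α : ℂ} (hα : α ≠ 1) {m : ℕ} {h : ℂ → ℂ} {U : Set ℂ}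
    (hU : IsOpen U) (hmem : α ∈ U) (hdiff : DifferentiableOn ℂ h U) (hne : h α ≠ 0)
    (heq : ∀ z ∈ U, riemannZeta z = (z - α) ^ m * h z) :
    analyticOrderAt riemannZeta α = m := by
  rw [(zeta_analyticAt hα).analyticOrderAt_eq_natCast]
  refine ⟨h, hdiff.analyticAt (hU.mem_nhds hmem), hne, ?_⟩
  filter_upwards [hU.mem_nhds hmem] with z hz
  simpa [smul_eq_mul] using heq z hz

/-- At a zero of zeta in the strip there is a factorization realizing the order. -/
private lemma exists_factorization {α : ℂ} (hα : α ≠ 1) (h0 : riemannZeta α = 0) :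
    ∃ (m : ℕ) (h : ℂ → ℂ) (U : Set ℂ), 1 ≤ m ∧ IsOpen U ∧ α ∈ U ∧
      DifferentiableOn ℂ h U ∧ h α ≠ 0 ∧
      (∀ z ∈ U, riemannZeta z = (z - α) ^ m * h z) := by
  have hA := zeta_analyticAt hα
  have htop : analyticOrderAt riemannZeta α ≠ ⊤ := by
    simp only [ne_eq, analyticOrderAt_eq_top]; exact zeta_not_ev_zero hα
  obtain ⟨m, hm⟩ := WithTop.ne_top_iff_exists.mp htop
  obtain ⟨g, hg, hgne, hev⟩ := (hA.analyticOrderAt_eq_natCast (n := m)).mp hm.symm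
  have hm1 : 1 ≤ m := by
    rcases Nat.eq_zero_or_pos m with h' | h'
    · exfalso
      apply hgne
      have := hev.self_of_nhds
      simpa [h', h0] using this.symm
    · exact h'
  have hev2 : ∀ᶠ z in nhds α,
      riemannZeta z = (z - α) ^ m * g z ∧ AnalyticAt ℂ g z := by
    filter_upwards [hev, hg.eventually_analyticAt] with z h1 h2
    exact ⟨by simpa [smul_eq_mul] using h1, h2⟩
  obtain ⟨U, hUsub, hUopen, hmemU⟩ := mem_nhds_iff.mp hev2
  exact ⟨m, g, U, hm1, hUopen, hmemU,
    fun z hz => ((hUsub hz).2).differentiableAt.differentiableWithinAt,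
    hgne, fun z hz => (hUsub hz).1⟩

private lemma abs_indiff_iff {w : ℂ} (hw : w ≠ 0) :
    ‖1 - 1 / w‖ = 1 ↔ w.re = 1 / 2 := by
  have h1 : 1 - 1 / w = (w - 1) / w := by field_simp
  rw [h1, norm_div]
  rw [div_eq_one_iff_eq (by simpa using hw)]
  constructor
  · intro h
    have := congrArg (· ^ 2) h
    simp only [Complex.sq_norm] at this
    simp only [normSq_apply, sub_re, one_re, sub_im, one_im] at this
    nlinarith [this]
  · intro h
    have hn : normSq (w - 1) = normSq w := by
      simp only [normSq_apply, sub_re, one_re, sub_im, one_im]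
      nlinarith [h]
    rw [Complex.norm_def, Complex.norm_def, hn]

/-- (a) The Riemann hypothesis together with the simplicity hypothesis (every zero of `ζ`
in the critical strip has real part `1/2` and order `1`) holds if and only if
(b) every zero `α` of `ζ` in the critical strip, of order `m`, satisfies
`|1 - 1/(mα)| = 1`, i.e. is an indifferent fixed point of `ν_ζ`. -/
theorem RH_simplicity_iff_indifferent :
    (∀ (α : ℂ), 0 < α.re → α.re < 1 → riemannZeta α = 0 →
      α.re = 1 / 2 ∧
      ∀ (m : ℕ), 1 ≤ m → ∀ (h : ℂ → ℂ) (U : Set ℂ), IsOpen U → α ∈ U →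
        DifferentiableOn ℂ h U → h α ≠ 0 →
        (∀ z ∈ U, riemannZeta z = (z - α) ^ m * h z) → m = 1) ↔
    (∀ (α : ℂ), 0 < α.re → α.re < 1 → ∀ (m : ℕ), 1 ≤ m →
      ∀ (h : ℂ → ℂ) (U : Set ℂ), IsOpen U → α ∈ U → DifferentiableOn ℂ h U → h α ≠ 0 →
      (∀ z ∈ U, riemannZeta z = (z - α) ^ m * h z) →
      ‖1 - 1 / (m * α)‖ = 1) := by
  constructor
  · intro H α h0 h1 m hm h U hUopen hmem hdiff hne heq
    have hζ : riemannZeta α = 0 := by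
      have := heq α hmem
      simpa [sub_self, zero_pow (by omega : m ≠ 0)] using this
    obtain ⟨hre, hsimp⟩ := H α h0 h1 hζ
    have hm1 : m = 1 := hsimp m hm h U hUopen hmem hdiff hne heq
    subst hm1
    have hα0 : α ≠ 0 := by
      intro h'; rw [h'] at hre; norm_num at hre
    rw [Nat.cast_one, one_mul]
    exact (abs_indiff_iff hα0).mpr hre
  · intro H α h0 h1 hζ
    have hα1 : α ≠ 1 := by
      intro h'; rw [h'] at h1; norm_num at h1
    have hα0 : α ≠ 0 := by
      intro h'; rw [h'] at h0; norm_num at h0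
    -- factorization at α
    obtain ⟨m₀, g₀, U₀, hm₀, hU₀, hmem₀, hdiff₀, hne₀, heq₀⟩ := exists_factorization hα1 hζ
    have hord₀ := order_of_factor hα1 hU₀ hmem₀ hdiff₀ hne₀ heq₀
    have habs₀ := H α h0 h1 m₀ hm₀ g₀ U₀ hU₀ hmem₀ hdiff₀ hne₀ heq₀
    have hw₀ : ((m₀ : ℂ) * α) ≠ 0 :=
      mul_ne_zero (Nat.cast_ne_zero.mpr (by omega)) hα0
    have hre₀ : (m₀ : ℝ) * α.re = 1 / 2 := by
      have := (abs_indiff_iff hw₀).mp habs₀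
      simpa [mul_re] using this
    -- the reflected zero 1 - α
    set β : ℂ := 1 - α with hβ
    have hβre : β.re = 1 - α.re := by simp [hβ]
    have hβ0 : 0 < β.re := by rw [hβre]; linarith
    have hβ1 : β.re < 1 := by rw [hβre]; linarith
    have hβne1 : β ≠ 1 := by
      intro h'; rw [h'] at hβ1; norm_num at hβ1
    have hβne0 : β ≠ 0 := by
      intro h'; rw [h'] at hβ0; norm_num at hβ0
    have hΛα : completedRiemannZeta α = 0 := by
      have hd := riemannZeta_def_of_ne_zero hα0
      rw [hζ] at hd
      have := Gammaℝ_ne_zero_of_re_pos h0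
      field_simp at hd
      simpa using hd.symm
    have hζβ : riemannZeta β = 0 := by
      rw [riemannZeta_def_of_ne_zero hβne0, hβ, completedRiemannZeta_one_sub, hΛα, zero_div]
    obtain ⟨m₁, g₁, U₁, hm₁, hU₁, hmem₁, hdiff₁, hne₁, heq₁⟩ := exists_factorization hβne1 hζβ
    have habs₁ := H β hβ0 hβ1 m₁ hm₁ g₁ U₁ hU₁ hmem₁ hdiff₁ hne₁ heq₁
    have hw₁ : ((m₁ : ℂ) * β) ≠ 0 :=
      mul_ne_zero (Nat.cast_ne_zero.mpr (by omega)) hβne0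
    have hre₁ : (m₁ : ℝ) * β.re = 1 / 2 := by
      have := (abs_indiff_iff hw₁).mp habs₁
      simpa [mul_re] using this
    rw [hβre] at hre₁
    have hm₀R : (1 : ℝ) ≤ (m₀ : ℝ) := by exact_mod_cast hm₀
    have hm₁R : (1 : ℝ) ≤ (m₁ : ℝ) := by exact_mod_cast hm₁
    have hαle : α.re ≤ 1 / 2 := by nlinarith
    have hαge : 1 / 2 ≤ α.re := by nlinarith
    have hre : α.re = 1 / 2 := le_antisymm hαle hαge
    refine ⟨hre, ?_⟩
    intro m hm h U hUopen hmem hdiff hne heq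
    have hord := order_of_factor hα1 hUopen hmem hdiff hne heq
    have hmm₀ : m = m₀ := by
      have := hord₀ ▸ hord
      exact_mod_cast this.symm
    have hm₀1 : m₀ = 1 := by
      have : (m₀ : ℝ) * (1 / 2) = 1 / 2 := hre ▸ hre₀
      have : (m₀ : ℝ) = 1 := by linarith
      exact_mod_cast this
    omega
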